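/- For every σ ∈ S_{2d} there exist σ′, σ″ ∈ H_{2d}, an integer r ≥ 1, and integers 0 = d_0 < d_1 < ⋯ < d_{r−1} < d_r = d such that σ′σσ″ = τ_{d_0,d_1} τ_{d_1,d_2} ⋯ τ_{d_{r−1},d_r}, where for integers 0 ≤ a < b ≤ d, τ_{a,b} ∈ S_{2d} denotes the cycle (2a+2, 2a+4, …, 2b−2, 2b) (sending 2a+2 ↦ 2a+4, …, 2b−2 ↦ 2b, 2b ↦ 2a+2, and fixing all other points of {1,…,2d}). -/

import Mathlib

/-!
STATEMENT 7: For every σ ∈ S_{2d} there are σ′, σ″ in the hyperoctahedral group H_{2d} and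
integers 0 = d_0 < d_1 < ⋯ < d_r = d such that σ′σσ″ = τ_{d_0,d_1} ⋯ τ_{d_{r−1},d_r}, where
τ_{a,b} is the cycle (2a+2, 2a+4, …, 2b) (1-based).  We characterize the product of the
disjoint cycles τ_{d_{j-1},d_j} pointwise (0-based): it fixes every even position 2s, and it
maps the odd position 2s+1 (for d_{j−1} ≤ s < d_j) to 2s+3 if s+1 < d_j, and to 2d_{j−1}+1
if s+1 = d_j.
-/

/-- The fixed-point-free involution σ∘ = (1 2)(3 4)⋯(2d−1 2d) of {0,…,2d−1} (0-based),
swapping 2k ↔ 2k+1 for each k. -/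
def pairSwap (d : ℕ) : Equiv.Perm (Fin (2 * d)) :=
  Function.Involutive.toPerm
    (fun r => ⟨2 * ((r : ℕ) / 2) + (1 - (r : ℕ) % 2), by have := r.isLt; omega⟩)
    (by
      intro r
      apply Fin.ext
      simp only []
      have := r.isLt
      omega)

open Equiv Equiv.Perm Finset

set_option linter.unusedSectionVars false
namespace S7

variable {d : ℕ}

lemma e_val (x : Fin (2*d)) : ((pairSwap d x : Fin (2*d)) : ℕ) = 2*((x:ℕ)/2) + (1 - (x:ℕ)%2) := rfl

lemma e_invol (x : Fin (2*d)) : pairSwap d (pairSwap d x) = x := by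
  apply Fin.ext
  rw [e_val, e_val]
  have := x.isLt
  omega

lemma e_fpf (x : Fin (2*d)) : pairSwap d x ≠ x := by
  intro h
  have := congrArg (Fin.val) h
  rw [e_val] at this
  have := x.isLt
  omega

lemma e_mul_self : (pairSwap d) * (pairSwap d) = 1 := by
  ext x
  simp [Equiv.Perm.mul_apply, e_invol]

variable (τ : Equiv.Perm (Fin (2*d)))

def ρ : Equiv.Perm (Fin (2*d)) := τ * pairSwap d

variable {τ}
variable (hτ : τ * τ = 1) (hf : ∀ x, τ x ≠ x)
include hτ

lemma tau_apply_tau (x : Fin (2*d)) : τ (τ x) = x := by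
  have : (τ * τ) x = (1 : Equiv.Perm (Fin (2*d))) x := by rw [hτ]
  simpa [Equiv.Perm.mul_apply] using this

lemma e_rho_e : pairSwap d * ρ τ * pairSwap d = (ρ τ)⁻¹ := by
  rw [ρ, mul_inv_rev]
  rw [show τ⁻¹ = τ from inv_eq_of_mul_eq_one_left hτ]
  rw [show (pairSwap d)⁻¹ = pairSwap d from inv_eq_of_mul_eq_one_left e_mul_self]
  calc pairSwap d * (τ * pairSwap d) * pairSwap d
      = pairSwap d * τ * (pairSwap d * pairSwap d) := by group
    _ = pairSwap d * τ := by rw [e_mul_self, mul_one]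

lemma e_zpow (i : ℤ) (x : Fin (2*d)) :
    pairSwap d (((ρ τ)^i) x) = ((ρ τ)^(-i)) (pairSwap d x) := by
  have h1 : pairSwap d * ρ τ = (ρ τ)⁻¹ * pairSwap d := by
    have := e_rho_e hτ
    calc pairSwap d * ρ τ = pairSwap d * ρ τ * (pairSwap d * pairSwap d) := by
          rw [e_mul_self, mul_one]
      _ = (pairSwap d * ρ τ * pairSwap d) * pairSwap d := by group
      _ = (ρ τ)⁻¹ * pairSwap d := by rw [this]
  have hsc : SemiconjBy (pairSwap d) (ρ τ) ((ρ τ)⁻¹) := h1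
  have := (hsc.zpow_right i).eq
  have h2 : pairSwap d * (ρ τ)^i = ((ρ τ)⁻¹)^i * pairSwap d := this
  have h3 : ((ρ τ)⁻¹)^i = (ρ τ)^(-i) := by rw [inv_zpow, zpow_neg]
  rw [h3] at h2
  calc pairSwap d (((ρ τ)^i) x) = (pairSwap d * (ρ τ)^i) x := rfl
    _ = ((ρ τ)^(-i) * pairSwap d) x := by rw [h2]
    _ = ((ρ τ)^(-i)) (pairSwap d x) := rfl

omit hτ in
lemma tau_eq_rho_e (x : Fin (2*d)) : τ x = ρ τ (pairSwap d x) := by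
  rw [ρ, Equiv.Perm.mul_apply, e_invol]

include hf in
lemma noSC (x : Fin (2*d)) : ¬ SameCycle (ρ τ) x (pairSwap d x) := by
  rintro ⟨M, hM⟩
  have key1 : ∀ k : ℤ, pairSwap d (((ρ τ)^k) x) = ((ρ τ)^(M-k)) x := by
    intro k
    rw [e_zpow hτ, ← hM]
    rw [← Equiv.Perm.mul_apply, ← zpow_add]
    congr 1
    ring_nf
  have keyA : ∀ k : ℤ, ((ρ τ)^(M - 2*k)) x ≠ x := by
    intro k h
    have h2 : ((ρ τ)^(M-k)) x = ((ρ τ)^k) x := by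
      have : ((ρ τ)^k) (((ρ τ)^(M-2*k)) x) = ((ρ τ)^k) x := by rw [h]
      rw [← Equiv.Perm.mul_apply, ← zpow_add] at this
      rw [show k + (M - 2*k) = M - k by ring] at this
      exact this
    have := key1 k
    rw [h2] at this
    exact e_fpf _ this
  have keyB : ∀ k : ℤ, ((ρ τ)^(M + 1 - 2*k)) x ≠ x := by
    intro k h
    have hτk : τ (((ρ τ)^k) x) = ((ρ τ)^(M-k+1)) x := by
      rw [tau_eq_rho_e, key1 k, ← Equiv.Perm.mul_apply]
      rw [show (ρ τ) * (ρ τ)^(M-k) = (ρ τ)^(M-k+1) by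
        rw [← zpow_one_add]; ring_nf]
    have h2 : ((ρ τ)^(M-k+1)) x = ((ρ τ)^k) x := by
      have : ((ρ τ)^k) (((ρ τ)^(M+1-2*k)) x) = ((ρ τ)^k) x := by rw [h]
      rw [← Equiv.Perm.mul_apply, ← zpow_add] at this
      rw [show k + (M + 1 - 2*k) = M - k + 1 by ring] at this
      exact this
    rw [h2] at hτk
    exact hf _ hτk
  rcases Int.even_or_odd M with ⟨k, hk⟩ | ⟨k, hk⟩
  · exact keyA k (by rw [show M - 2*k = 0 by omega]; simp)
  · exact keyB (k+1) (by rw [show M + 1 - 2*(k+1) = 0 by omega]; simp)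

variable (τ) in
open scoped Classical in
/-- the relation "same alternating cycle" -/
def Rel (x y : Fin (2*d)) : Prop :=
  SameCycle (ρ τ) x y ∨ SameCycle (ρ τ) x (pairSwap d y)

lemma sc_e {x y : Fin (2*d)} :
    SameCycle (ρ τ) x (pairSwap d y) ↔ SameCycle (ρ τ) (pairSwap d x) y := by
  constructor
  · rintro ⟨i, hi⟩
    refine ⟨-i, ?_⟩
    have := congrArg (pairSwap d) hi
    rw [e_invol, e_zpow hτ] at this
    exact this
  · rintro ⟨i, hi⟩
    refine ⟨-i, ?_⟩
    have := congrArg (pairSwap d) hi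
    rw [e_zpow hτ] at this
    rw [← this, e_invol]

lemma sc_ee {x y : Fin (2*d)} (h : SameCycle (ρ τ) x y) :
    SameCycle (ρ τ) (pairSwap d x) (pairSwap d y) := by
  rw [← sc_e hτ, e_invol]
  exact h

omit hτ in
lemma rel_refl (x : Fin (2*d)) : Rel τ x x := Or.inl (SameCycle.refl _ _)

lemma rel_symm {x y : Fin (2*d)} (h : Rel τ x y) : Rel τ y x := by
  rcases h with h | h
  · exact Or.inl h.symm
  · exact Or.inr ((sc_e hτ).mpr h.symm)

lemma rel_trans {x y z : Fin (2*d)} (h1 : Rel τ x y) (h2 : Rel τ y z) : Rel τ x z := by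
  rcases h1 with h1 | h1 <;> rcases h2 with h2 | h2
  · exact Or.inl (h1.trans h2)
  · exact Or.inr (h1.trans h2)
  · exact Or.inr (h1.trans (sc_ee hτ h2))
  · exact Or.inl (h1.trans ((sc_e hτ).mp h2))

variable (τ) in
open scoped Classical in
noncomputable def U (x : Fin (2*d)) : Finset (Fin (2*d)) :=
  univ.filter (Rel τ x)

omit hτ in
lemma mem_U {x y : Fin (2*d)} : y ∈ U τ x ↔ Rel τ x y := by
  classical
  simp [U]

omit hτ in
lemma self_mem_U (x : Fin (2*d)) : x ∈ U τ x := mem_U.2 (rel_refl x)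

lemma U_eq_of_rel {x y : Fin (2*d)} (h : Rel τ x y) : U τ x = U τ y := by
  ext z
  rw [mem_U, mem_U]
  exact ⟨fun hz => rel_trans hτ (rel_symm hτ h) hz, fun hz => rel_trans hτ h hz⟩

variable (τ) in
noncomputable def m (x : Fin (2*d)) : Fin (2*d) := (U τ x).min' ⟨x, self_mem_U x⟩

omit hτ in
lemma m_mem_U (x : Fin (2*d)) : m τ x ∈ U τ x := (U τ x).min'_mem _

omit hτ in
lemma rel_m (x : Fin (2*d)) : Rel τ x (m τ x) := mem_U.1 (m_mem_U x)

lemma m_eq_of_rel {x y : Fin (2*d)} (h : Rel τ x y) : m τ x = m τ y := by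
  unfold m
  congr 1
  exact U_eq_of_rel hτ h

lemma m_rep (x : Fin (2*d)) : m τ (m τ x) = m τ x :=
  (m_eq_of_rel hτ (rel_m x)).symm

omit hτ in
lemma rel_e (x : Fin (2*d)) : Rel τ x (pairSwap d x) := by
  right
  rw [e_invol]

lemma m_e (x : Fin (2*d)) : m τ (pairSwap d x) = m τ x :=
  (m_eq_of_rel hτ (rel_e x)).symm

include hf in
lemma rel_tau (x : Fin (2*d)) : Rel τ x (τ x) := by
  right
  have h1 := e_zpow hτ (1:ℤ) (pairSwap d x)
  rw [zpow_one, e_invol] at h1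
  refine ⟨-1, ?_⟩
  rw [tau_eq_rho_e (τ := τ) x]
  exact h1.symm

include hf in
lemma m_tau (x : Fin (2*d)) : m τ (τ x) = m τ x :=
  (m_eq_of_rel hτ (rel_tau hτ hf x)).symm

variable (τ) in
noncomputable def lam (x : Fin (2*d)) : ℕ := Function.minimalPeriod (⇑(ρ τ)) (m τ x)

omit hτ in
lemma mem_pp (x : Fin (2*d)) : x ∈ Function.periodicPts ⇑(ρ τ) := by
  refine Function.mk_mem_periodicPts (orderOf_pos (ρ τ)) ?_
  show Function.IsPeriodicPt _ _ _
  unfold Function.IsPeriodicPt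
  rw [Equiv.Perm.iterate_eq_pow, pow_orderOf_eq_one]
  rfl

omit hτ in
lemma lam_pos (x : Fin (2*d)) : 1 ≤ lam τ x :=
  Function.minimalPeriod_pos_of_mem_periodicPts (mem_pp (m τ x))

omit hτ in
lemma pow_lam (x : Fin (2*d)) : ((ρ τ)^(lam τ x)) (m τ x) = m τ x := by
  have := Function.iterate_minimalPeriod (f := ⇑(ρ τ)) (x := m τ x)
  rwa [Equiv.Perm.iterate_eq_pow] at this

omit hτ in
lemma pow_mod_lam (x : Fin (2*d)) (i : ℕ) :
    ((ρ τ)^(i % lam τ x)) (m τ x) = ((ρ τ)^i) (m τ x) := by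
  have := Function.iterate_mod_minimalPeriod_eq (f := ⇑(ρ τ)) (x := m τ x) (n := i)
  rwa [Equiv.Perm.iterate_eq_pow, Equiv.Perm.iterate_eq_pow] at this

omit hτ in
lemma pow_inj_lam (x : Fin (2*d)) {i j : ℕ} (hi : i < lam τ x) (hj : j < lam τ x)
    (h : ((ρ τ)^i) (m τ x) = ((ρ τ)^j) (m τ x)) : i = j := by
  have := Function.iterate_injOn_Iio_minimalPeriod (f := ⇑(ρ τ)) (x := m τ x)
    (Set.mem_Iio.2 hi) (Set.mem_Iio.2 hj)
  simp only [Equiv.Perm.iterate_eq_pow] at this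
  exact this h

variable (τ) in
noncomputable def walk (z : Fin (2*d)) (k : ℕ) : Fin (2*d) :=
  if k % 2 = 0 then ((ρ τ)^(k/2)) z else pairSwap d (((ρ τ)^(k/2)) z)

include hf in
lemma walk_exists (x : Fin (2*d)) :
    ∃ k, k < 2 * lam τ x ∧ walk τ (m τ x) k = x := by
  have hrel : Rel τ (m τ x) x := rel_symm hτ (rel_m x)
  rcases hrel with h | h
  · obtain ⟨i, _, hi⟩ := h.exists_pow_eq'
    refine ⟨2 * (i % lam τ x), by have := Nat.mod_lt i (lam_pos (τ := τ) x); omega, ?_⟩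
    unfold walk
    rw [if_pos (by omega)]
    rw [Nat.mul_div_cancel_left _ (by norm_num : 0 < 2)]
    rw [pow_mod_lam]
    exact hi
  · obtain ⟨i, _, hi⟩ := h.exists_pow_eq'
    refine ⟨2 * (i % lam τ x) + 1, by have := Nat.mod_lt i (lam_pos (τ := τ) x); omega, ?_⟩
    unfold walk
    rw [if_neg (by omega)]
    rw [show (2 * (i % lam τ x) + 1) / 2 = i % lam τ x by omega]
    rw [pow_mod_lam, hi, e_invol]

lemma sc_of_pow_e {z : Fin (2*d)} {a b : ℕ}
    (h : ((ρ τ)^a) z = pairSwap d (((ρ τ)^b) z)) :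
    SameCycle (ρ τ) z (pairSwap d z) := by
  refine ⟨(b : ℤ) + (a : ℤ), ?_⟩
  have h3 := e_zpow hτ ((b : ℕ) : ℤ) z
  have h4 : ((ρ τ)^((a:ℕ):ℤ)) z = ((ρ τ)^(-((b:ℕ):ℤ))) (pairSwap d z) := by
    rw [zpow_natCast, h]
    rw [zpow_natCast] at h3
    exact h3
  have h5 := congrArg (⇑((ρ τ)^(((b:ℕ)):ℤ))) h4
  rw [← Equiv.Perm.mul_apply, ← Equiv.Perm.mul_apply, ← zpow_add, ← zpow_add] at h5
  rw [show ((b:ℕ):ℤ) + -((b:ℕ):ℤ) = 0 by ring, zpow_zero] at h5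
  simpa using h5

include hf in
lemma walk_inj (x : Fin (2*d)) {j k : ℕ} (hj : j < 2 * lam τ x) (hk : k < 2 * lam τ x)
    (h : walk τ (m τ x) j = walk τ (m τ x) k) : j = k := by
  unfold walk at h
  rcases Nat.mod_two_eq_zero_or_one j with hj2 | hj2 <;> rcases Nat.mod_two_eq_zero_or_one k with hk2 | hk2
  · rw [if_pos (by omega), if_pos (by omega)] at h
    have := pow_inj_lam x (by omega : j/2 < lam τ x) (by omega : k/2 < lam τ x) h
    omega
  · rw [if_pos (by omega), if_neg (by omega)] at h
    exact absurd (sc_of_pow_e hτ h) (noSC hτ hf (m τ x))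
  · rw [if_neg (by omega), if_pos (by omega)] at h
    exact absurd (sc_of_pow_e hτ h.symm) (noSC hτ hf (m τ x))
  · rw [if_neg (by omega), if_neg (by omega)] at h
    have h2 := congrArg (pairSwap d) h
    rw [e_invol, e_invol] at h2
    have := pow_inj_lam x (by omega : j/2 < lam τ x) (by omega : k/2 < lam τ x) h2
    omega

open scoped Classical in
noncomputable def pos (hτ : τ * τ = 1) (hf : ∀ x, τ x ≠ x) (x : Fin (2*d)) : ℕ :=
  Nat.find (p := fun k => walk τ (m τ x) k = x)
    (by obtain ⟨k, _, hk⟩ := walk_exists hτ hf x; exact ⟨k, hk⟩)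

include hf in
open scoped Classical in
lemma pos_spec (x : Fin (2*d)) : walk τ (m τ x) (pos hτ hf x) = x :=
  Nat.find_spec (p := fun k => walk τ (m τ x) k = x)
    (by obtain ⟨k, _, hk⟩ := walk_exists hτ hf x; exact ⟨k, hk⟩)

include hf in
open scoped Classical in
lemma pos_lt (x : Fin (2*d)) : pos hτ hf x < 2 * lam τ x := by
  obtain ⟨k, hk1, hk2⟩ := walk_exists hτ hf x
  have h9 : pos hτ hf x ≤ k := Nat.find_min' _ hk2
  omega

include hf in
lemma pos_eq {x : Fin (2*d)} {k : ℕ} (h1 : k < 2 * lam τ x)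
    (h2 : walk τ (m τ x) k = x) : pos hτ hf x = k :=
  walk_inj hτ hf x (pos_lt hτ hf x) h1 ((pos_spec hτ hf x).trans h2.symm)

lemma rho_e_pow {z : Fin (2*d)} {i : ℕ} (hi : 1 ≤ i) :
    (ρ τ) (pairSwap d (((ρ τ)^i) z)) = pairSwap d (((ρ τ)^(i-1)) z) := by
  have h1 : ((ρ τ)^i) z = (ρ τ) (((ρ τ)^(i-1)) z) := by
    conv_lhs => rw [show i = i - 1 + 1 by omega]
    rw [pow_succ', Equiv.Perm.mul_apply]
  rw [h1]
  have h2 := e_zpow hτ (1 : ℤ) (((ρ τ)^(i-1)) z)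
  rw [zpow_one] at h2
  rw [h2]
  rw [show ((ρ τ)^(-1 : ℤ)) = (ρ τ)⁻¹ by rw [zpow_neg_one]]
  exact Equiv.apply_symm_apply _ _

lemma rho_e_rep (x : Fin (2*d)) :
    (ρ τ) (pairSwap d (m τ x)) = pairSwap d (((ρ τ)^(lam τ x - 1)) (m τ x)) := by
  have h1 := rho_e_pow (τ := τ) hτ (z := m τ x) (i := lam τ x) (lam_pos x)
  rwa [pow_lam] at h1

include hf in
lemma m_pos_det {x y : Fin (2*d)} (h1 : m τ x = m τ y) (h2 : pos hτ hf x = pos hτ hf y) :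
    x = y := by
  have := pos_spec hτ hf x
  rw [h1, h2, pos_spec hτ hf y] at this
  exact this.symm

include hf in
lemma lam_e (x : Fin (2*d)) : lam τ (pairSwap d x) = lam τ x := by
  unfold lam
  rw [m_e hτ]

include hf in
lemma lam_tau (x : Fin (2*d)) : lam τ (τ x) = lam τ x := by
  unfold lam
  rw [m_tau hτ hf]

include hf in
lemma pos_e (x : Fin (2*d)) :
    pos hτ hf (pairSwap d x) = if pos hτ hf x % 2 = 0 then pos hτ hf x + 1 else pos hτ hf x - 1 := by
  have hm := m_e hτ x
  have hl := lam_e hτ hf x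
  have hk := pos_spec hτ hf x
  have hklt := pos_lt hτ hf x
  set k := pos hτ hf x with hkdef
  rcases Nat.mod_two_eq_zero_or_one k with hk2 | hk2
  · rw [if_pos hk2]
    refine pos_eq hτ hf ?_ ?_
    · rw [hl]; omega
    · rw [hm]
      unfold walk
      rw [if_neg (by omega)]
      rw [show (k+1)/2 = k/2 by omega]
      unfold walk at hk
      rw [if_pos hk2] at hk
      rw [hk]
  · rw [if_neg (by omega)]
    refine pos_eq hτ hf ?_ ?_
    · rw [hl]; omega
    · rw [hm]
      unfold walk
      rw [if_pos (by omega)]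
      rw [show (k-1)/2 = k/2 by omega]
      unfold walk at hk
      rw [if_neg (by omega)] at hk
      have hex : pairSwap d x = ((ρ τ)^(k/2)) (m τ x) := by
        have := congrArg (pairSwap d) hk.symm
        rwa [e_invol] at this
      exact hex.symm

include hf in
lemma pos_tau (x : Fin (2*d)) :
    pos hτ hf (τ x) = if pos hτ hf x % 2 = 0
      then (if pos hτ hf x = 0 then 2 * lam τ x - 1 else pos hτ hf x - 1)
      else (if pos hτ hf x = 2 * lam τ x - 1 then 0 else pos hτ hf x + 1) := by
  have hm := m_tau hτ hf x
  have hl := lam_tau hτ hf x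
  have hk := pos_spec hτ hf x
  have hklt := pos_lt hτ hf x
  have hL := lam_pos (τ := τ) x
  have htx : τ x = (ρ τ) (pairSwap d x) := tau_eq_rho_e x
  set k := pos hτ hf x with hkdef
  rcases Nat.mod_two_eq_zero_or_one k with hk2 | hk2
  · unfold walk at hk
    rw [if_pos hk2] at hk
    have hex : pairSwap d x = pairSwap d (((ρ τ)^(k/2)) (m τ x)) :=
      congrArg _ hk.symm
    rcases Nat.eq_zero_or_pos k with hk0 | hk0
    · rw [if_pos hk2, if_pos hk0]
      refine pos_eq hτ hf ?_ ?_
      · rw [hl]; omega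
      · rw [hm]
        unfold walk
        rw [if_neg (by omega)]
        rw [show (2 * lam τ x - 1)/2 = lam τ x - 1 by omega]
        rw [htx, hex, hk0]
        rw [show ((ρ τ)^(0/2)) (m τ x) = m τ x by norm_num]
        exact (rho_e_rep hτ x).symm
    · rw [if_pos hk2, if_neg (by omega)]
      refine pos_eq hτ hf ?_ ?_
      · rw [hl]; omega
      · rw [hm]
        unfold walk
        rw [if_neg (by omega)]
        rw [show (k-1)/2 = k/2 - 1 by omega]
        rw [htx, hex, rho_e_pow hτ (by omega : 1 ≤ k/2)]
  · unfold walk at hk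
    rw [if_neg (by omega)] at hk
    have hex : pairSwap d x = ((ρ τ)^(k/2)) (m τ x) := by
      have := congrArg (pairSwap d) hk.symm
      rwa [e_invol] at this
    by_cases hkL : k = 2 * lam τ x - 1
    · rw [if_neg (by omega), if_pos hkL]
      refine pos_eq hτ hf ?_ ?_
      · rw [hl]; omega
      · rw [hm]
        unfold walk
        rw [if_pos (by omega)]
        rw [show ((ρ τ)^(0/2)) (m τ x) = m τ x by norm_num]
        rw [htx, hex]
        rw [← Equiv.Perm.mul_apply, ← pow_succ']
        rw [show k/2 + 1 = lam τ x by omega]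
        exact (pow_lam x).symm
    · rw [if_neg (by omega), if_neg hkL]
      refine pos_eq hτ hf ?_ ?_
      · rw [hl]; omega
      · rw [hm]
        unfold walk
        rw [if_pos (by omega)]
        rw [show (k+1)/2 = k/2 + 1 by omega]
        rw [htx, hex]
        rw [← Equiv.Perm.mul_apply, ← pow_succ']

include hf in
lemma U_eq_walk_image (x : Fin (2*d)) :
    U τ x = (Finset.range (2 * lam τ x)).image (walk τ (m τ x)) := by
  ext y
  simp only [Finset.mem_image, Finset.mem_range]
  rw [mem_U]
  constructor
  · intro h
    have hmy : m τ y = m τ x := (m_eq_of_rel hτ h).symm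
    have hly : lam τ y = lam τ x := by unfold lam; rw [hmy]
    obtain ⟨k, hk1, hk2⟩ := walk_exists hτ hf y
    exact ⟨k, by omega, by rw [← hmy]; exact hk2⟩
  · rintro ⟨k, hk, rfl⟩
    refine rel_trans hτ (rel_m x) ?_
    unfold walk
    rcases Nat.mod_two_eq_zero_or_one k with h2 | h2
    · rw [if_pos h2]
      exact Or.inl ⟨(k/2 : ℕ), by rw [zpow_natCast]⟩
    · rw [if_neg (by omega)]
      refine Or.inr ⟨(k/2 : ℕ), ?_⟩
      rw [zpow_natCast, e_invol]

include hf in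
lemma card_U (x : Fin (2*d)) : (U τ x).card = 2 * lam τ x := by
  rw [U_eq_walk_image hτ hf x, Finset.card_image_of_injOn, Finset.card_range]
  intro a ha b hb hab
  simp only [Finset.coe_range, Set.mem_Iio] at ha hb
  exact walk_inj hτ hf x ha hb hab

variable (τ) in
open scoped Classical in
noncomputable def base (x : Fin (2*d)) : ℕ :=
  ∑ y ∈ univ.filter (fun y => m τ y = y ∧ y < m τ x), (U τ y).card

omit hτ in
lemma base_congr {x y : Fin (2*d)} (h : m τ x = m τ y) : base τ x = base τ y := by
  unfold base
  rw [h]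

lemma rep_eq_of_mem {p q z : Fin (2*d)} (hp : m τ p = p) (hq : m τ q = q)
    (h1 : z ∈ U τ p) (h2 : z ∈ U τ q) : p = q := by
  have e1 := m_eq_of_rel hτ (mem_U.1 h1)
  have e2 := m_eq_of_rel hτ (mem_U.1 h2)
  rw [hp] at e1
  rw [hq] at e2
  rw [e1, ← e2]

open scoped Classical in
lemma sum_reps : ∑ y ∈ univ.filter (fun y => m τ y = y), (U τ y).card = 2*d := by
  classical
  have hbi : (univ.filter (fun y => m τ y = y)).biUnion (U τ) = univ := by
    ext z
    simp only [Finset.mem_biUnion, Finset.mem_univ, iff_true, Finset.mem_filter, true_and]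
    exact ⟨m τ z, m_rep hτ z, mem_U.2 (rel_symm hτ (rel_m z))⟩
  have hdisj : ∀ p ∈ univ.filter (fun y => m τ y = y), ∀ q ∈ univ.filter (fun y => m τ y = y),
      p ≠ q → Disjoint (U τ p) (U τ q) := by
    intro p hp q hq hne
    rw [Finset.mem_filter] at hp hq
    rw [Finset.disjoint_left]
    intro z h1 h2
    exact hne (rep_eq_of_mem hτ hp.2 hq.2 h1 h2)
  have := Finset.card_biUnion hdisj
  rw [hbi] at this
  rw [← this, Finset.card_univ, Fintype.card_fin]

open scoped Classical in
lemma base_add_le (x : Fin (2*d)) : base τ x + (U τ x).card ≤ 2*d := by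
  classical
  have hUx : (U τ x).card = (U τ (m τ x)).card := by
    rw [U_eq_of_rel hτ (rel_m x)]
  have hnot : m τ x ∉ univ.filter (fun y => m τ y = y ∧ y < m τ x) := by
    simp only [Finset.mem_filter]
    rintro ⟨-, -, h⟩
    exact lt_irrefl _ h
  have hins : base τ x + (U τ x).card
      = ∑ y ∈ insert (m τ x) (univ.filter (fun y => m τ y = y ∧ y < m τ x)), (U τ y).card := by
    rw [Finset.sum_insert hnot, hUx]
    unfold base
    omega
  rw [hins]
  refine le_trans (Finset.sum_le_sum_of_subset ?_) (le_of_eq (sum_reps hτ))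
  intro y hy
  rcases Finset.mem_insert.1 hy with rfl | hy
  · simp [m_rep hτ x]
  · simp only [Finset.mem_filter] at hy
    simp [hy.2.1]

open scoped Classical in
lemma base_block_le {p q : Fin (2*d)} (hp : m τ p = p) (hq : m τ q = q) (hlt : p < q) :
    base τ p + (U τ p).card ≤ base τ q := by
  classical
  have hUx : (U τ p).card = (U τ (m τ p)).card := by
    rw [U_eq_of_rel hτ (rel_m p)]
  have hnot : m τ p ∉ univ.filter (fun y => m τ y = y ∧ y < m τ p) := by
    simp only [Finset.mem_filter]
    rintro ⟨-, -, h⟩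
    exact lt_irrefl _ h
  have hins : base τ p + (U τ p).card
      = ∑ y ∈ insert (m τ p) (univ.filter (fun y => m τ y = y ∧ y < m τ p)), (U τ y).card := by
    rw [Finset.sum_insert hnot, hUx]
    unfold base
    omega
  rw [hins]
  unfold base
  refine Finset.sum_le_sum_of_subset ?_
  intro y hy
  rcases Finset.mem_insert.1 hy with rfl | hy
  · simp only [Finset.mem_filter, Finset.mem_univ, true_and]
    exact ⟨m_rep hτ p, by rw [hp, hq]; exact hlt⟩
  · simp only [Finset.mem_filter, Finset.mem_univ, true_and] at hy ⊢
    refine ⟨hy.1, ?_⟩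
    rw [hq]
    rw [hp] at hy
    exact lt_trans hy.2 hlt

lemma rep_unique {p q : Fin (2*d)} {z : ℕ} (hp : m τ p = p) (hq : m τ q = q)
    (h1 : base τ p ≤ z) (h2 : z < base τ p + (U τ p).card)
    (h3 : base τ q ≤ z) (h4 : z < base τ q + (U τ q).card) : p = q := by
  rcases lt_trichotomy p q with h | h | h
  · have := base_block_le hτ hp hq h
    omega
  · exact h
  · have := base_block_le hτ hq hp h
    omega

include hf in
lemma base_even (x : Fin (2*d)) : base τ x % 2 = 0 := by
  have : 2 ∣ base τ x := by
    refine Finset.dvd_sum ?_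
    intro y hy
    exact ⟨lam τ y, card_U hτ hf y⟩
  omega

def cpos (L k : ℕ) : ℕ := if k < 2 then k else 2*L - 2*(k/2) + k % 2

omit hτ in
lemma cpos_lt {L k : ℕ} (hL : 1 ≤ L) (hk : k < 2*L) : cpos L k < 2*L := by
  unfold cpos; split <;> omega

omit hτ in
lemma cpos_inj {L k k' : ℕ} (hk : k < 2*L) (hk' : k' < 2*L) (h : cpos L k = cpos L k') :
    k = k' := by
  unfold cpos at h; split at h <;> split at h <;> omega

noncomputable def fN (hτ : τ * τ = 1) (hf : ∀ x, τ x ≠ x) (x : Fin (2*d)) : ℕ :=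
  base τ x + cpos (lam τ x) (pos hτ hf x)

include hf in
lemma fN_range (x : Fin (2*d)) :
    base τ x ≤ fN hτ hf x ∧ fN hτ hf x < base τ x + (U τ x).card := by
  have h1 := cpos_lt (lam_pos (τ := τ) x) (pos_lt hτ hf x)
  have h2 := card_U hτ hf x
  unfold fN
  omega

include hf in
lemma fN_lt (x : Fin (2*d)) : fN hτ hf x < 2*d := by
  have h1 := fN_range hτ hf x
  have h2 := base_add_le hτ x
  omega

noncomputable def fF (hτ : τ * τ = 1) (hf : ∀ x, τ x ≠ x) (x : Fin (2*d)) : Fin (2*d) :=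
  ⟨fN hτ hf x % (2*d), Nat.mod_lt _ x.pos⟩

include hf in
lemma fF_val (x : Fin (2*d)) : ((fF hτ hf x : Fin (2*d)) : ℕ) = fN hτ hf x := by
  unfold fF
  simp [Nat.mod_eq_of_lt (fN_lt hτ hf x)]

include hf in
lemma base_rep_eq (x : Fin (2*d)) : base τ (m τ x) = base τ x :=
  base_congr (m_rep hτ x)

include hf in
lemma card_U_rep_eq (x : Fin (2*d)) : (U τ (m τ x)).card = (U τ x).card := by
  rw [U_eq_of_rel hτ (rel_m x)]

include hf in
lemma fN_inj {x y : Fin (2*d)} (h : fN hτ hf x = fN hτ hf y) : x = y := by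
  have hx := fN_range hτ hf x
  have hy := fN_range hτ hf y
  have hm : m τ x = m τ y := by
    refine rep_unique hτ (m_rep hτ x) (m_rep hτ y) (z := fN hτ hf x) ?_ ?_ ?_ ?_
    · rw [base_rep_eq hτ hf]; exact hx.1
    · rw [base_rep_eq hτ hf, card_U_rep_eq hτ hf]; exact hx.2
    · rw [base_rep_eq hτ hf, h]; exact hy.1
    · rw [base_rep_eq hτ hf, card_U_rep_eq hτ hf, h]; exact hy.2
  have hb : base τ x = base τ y := base_congr hm
  have hl : lam τ x = lam τ y := by unfold lam; rw [hm]
  have hpos : pos hτ hf x = pos hτ hf y := by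
    unfold fN at h
    rw [hb, hl] at h
    exact cpos_inj (hl ▸ pos_lt hτ hf x) (pos_lt hτ hf y) (by omega)
  exact m_pos_det hτ hf hm hpos

noncomputable def sig (hτ : τ * τ = 1) (hf : ∀ x, τ x ≠ x) : Equiv.Perm (Fin (2*d)) :=
  Equiv.ofBijective (fF hτ hf)
    (Finite.injective_iff_bijective.mp (fun x y hxy => by
      apply fN_inj hτ hf
      have := congrArg Fin.val hxy
      rwa [fF_val hτ hf, fF_val hτ hf] at this))

include hf in
lemma sig_apply (x : Fin (2*d)) : sig hτ hf x = fF hτ hf x := rfl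

include hf in
lemma sig_val (x : Fin (2*d)) : ((sig hτ hf x : Fin (2*d)) : ℕ) = fN hτ hf x := fF_val hτ hf x

variable (τ) in
open scoped Classical in
noncomputable def bsP (z : ℕ) : ℕ :=
  ∑ y ∈ univ.filter (fun y => m τ y = y ∧ base τ y + (U τ y).card ≤ z), (U τ y).card

variable (τ) in
open scoped Classical in
noncomputable def beP (z : ℕ) : ℕ :=
  ∑ y ∈ univ.filter (fun y => m τ y = y ∧ base τ y ≤ z), (U τ y).card

include hf in
lemma bsP_eq (x : Fin (2*d)) {z : ℕ} (h1 : base τ x ≤ z)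
    (h2 : z < base τ x + (U τ x).card) : bsP τ z = base τ x := by
  classical
  have hbase := base_rep_eq hτ hf x
  have hcard := card_U_rep_eq hτ hf x
  have hfe : univ.filter (fun y => m τ y = y ∧ base τ y + (U τ y).card ≤ z)
      = univ.filter (fun y => m τ y = y ∧ y < m τ x) := by
    ext y
    simp only [Finset.mem_filter, Finset.mem_univ, true_and]
    constructor
    · rintro ⟨hr, hle⟩
      refine ⟨hr, ?_⟩
      rcases lt_trichotomy y (m τ x) with h | h | h
      · exact h
      · exfalso
        rw [h] at hle
        omega
      · exfalso
        have := base_block_le hτ (m_rep hτ x) hr h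
        omega
    · rintro ⟨hr, hlt⟩
      refine ⟨hr, ?_⟩
      have := base_block_le hτ hr (m_rep hτ x) hlt
      omega
  unfold bsP
  rw [hfe]
  unfold base
  rfl

include hf in
lemma beP_eq (x : Fin (2*d)) {z : ℕ} (h1 : base τ x ≤ z)
    (h2 : z < base τ x + (U τ x).card) : beP τ z = base τ x + (U τ x).card := by
  classical
  have hbase := base_rep_eq hτ hf x
  have hcard := card_U_rep_eq hτ hf x
  have hnot : m τ x ∉ univ.filter (fun y => m τ y = y ∧ y < m τ x) := by
    simp only [Finset.mem_filter]
    rintro ⟨-, -, h⟩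
    exact lt_irrefl _ h
  have hfe : univ.filter (fun y => m τ y = y ∧ base τ y ≤ z)
      = insert (m τ x) (univ.filter (fun y => m τ y = y ∧ y < m τ x)) := by
    ext y
    simp only [Finset.mem_filter, Finset.mem_univ, true_and, Finset.mem_insert]
    constructor
    · rintro ⟨hr, hle⟩
      rcases lt_trichotomy y (m τ x) with h | h | h
      · exact Or.inr ⟨hr, h⟩
      · exact Or.inl h
      · exfalso
        have := base_block_le hτ (m_rep hτ x) hr h
        omega
    · rintro (rfl | ⟨hr, hlt⟩)
      · exact ⟨m_rep hτ x, by omega⟩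
      · refine ⟨hr, ?_⟩
        have := base_block_le hτ hr (m_rep hτ x) hlt
        omega
  unfold beP
  rw [hfe, Finset.sum_insert hnot]
  have : ∑ y ∈ univ.filter (fun y => m τ y = y ∧ y < m τ x), (U τ y).card = base τ x := rfl
  omega

include hf in
lemma fN_e (x : Fin (2*d)) :
    fN hτ hf (pairSwap d x)
      = if fN hτ hf x % 2 = 0 then fN hτ hf x + 1 else fN hτ hf x - 1 := by
  have hb : base τ (pairSwap d x) = base τ x := base_congr (m_e hτ x)
  have hl : lam τ (pairSwap d x) = lam τ x := lam_e hτ hf x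
  have hp := pos_e hτ hf x
  have hbe := base_even hτ hf x
  have hklt := pos_lt hτ hf x
  have hL := lam_pos (τ := τ) x
  unfold fN
  rw [hb, hl, hp]
  unfold cpos
  split_ifs <;> omega

include hf in
lemma fF_e (x : Fin (2*d)) : fF hτ hf (pairSwap d x) = pairSwap d (fF hτ hf x) := by
  apply Fin.ext
  rw [e_val, fF_val hτ hf, fF_val hτ hf, fN_e hτ hf x]
  have h1 := base_even hτ hf x
  have h2 := fN_range hτ hf x
  split_ifs with h <;> omega

variable (τ) in
open scoped Classical in
noncomputable def tD (z : ℕ) : ℕ :=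
  if z % 2 = 0 then (if z + 2 = beP τ z then bsP τ z + 1 else z + 3)
  else (if z = bsP τ z + 1 then beP τ z - 2 else z - 3)

include hf in
lemma bsP_fN (x : Fin (2*d)) : bsP τ (fN hτ hf x) = base τ x :=
  bsP_eq hτ hf x (fN_range hτ hf x).1 (fN_range hτ hf x).2

include hf in
lemma beP_fN (x : Fin (2*d)) : beP τ (fN hτ hf x) = base τ x + 2 * lam τ x := by
  rw [beP_eq hτ hf x (fN_range hτ hf x).1 (fN_range hτ hf x).2, card_U hτ hf]

include hf in
lemma fN_tau (x : Fin (2*d)) : fN hτ hf (τ x) = tD τ (fN hτ hf x) := by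
  have hb : base τ (τ x) = base τ x := base_congr (m_tau hτ hf x)
  have hl : lam τ (τ x) = lam τ x := lam_tau hτ hf x
  have hp := pos_tau hτ hf x
  have hbe := base_even hτ hf x
  have hklt := pos_lt hτ hf x
  have hL := lam_pos (τ := τ) x
  have hbs := bsP_fN hτ hf x
  have hbeP := beP_fN hτ hf x
  unfold tD
  rw [hbs, hbeP]
  unfold fN at *
  rw [hb, hl, hp]
  unfold cpos at *
  split_ifs <;> omega

variable (τ) in
open scoped Classical in
noncomputable def gN (z : ℕ) : ℕ :=
  if z % 2 = 0 then z else (if z + 1 = beP τ z then bsP τ z + 1 else z + 2)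

include hf in
lemma cover {z : ℕ} (hz : z < 2*d) :
    ∃ x, base τ x ≤ z ∧ z < base τ x + (U τ x).card := by
  refine ⟨(sig hτ hf).symm ⟨z, hz⟩, ?_, ?_⟩
  · have h1 := (fN_range hτ hf ((sig hτ hf).symm ⟨z, hz⟩)).1
    have h2 := congrArg Fin.val (Equiv.apply_symm_apply (sig hτ hf) ⟨z, hz⟩)
    rw [sig_val hτ hf] at h2
    simp at h2
    omega
  · have h1 := (fN_range hτ hf ((sig hτ hf).symm ⟨z, hz⟩)).2
    have h2 := congrArg Fin.val (Equiv.apply_symm_apply (sig hτ hf) ⟨z, hz⟩)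
    rw [sig_val hτ hf] at h2
    simp at h2
    omega

include hf in
lemma gN_mem (x : Fin (2*d)) {z : ℕ} (h1 : base τ x ≤ z)
    (h2 : z < base τ x + (U τ x).card) :
    (base τ x ≤ gN τ z ∧ gN τ z < base τ x + (U τ x).card) ∧ gN τ z % 2 = z % 2 := by
  have hbe := base_even hτ hf x
  have hc := card_U hτ hf x
  have hL := lam_pos (τ := τ) x
  unfold gN
  rcases Nat.mod_two_eq_zero_or_one z with hz2 | hz2
  · rw [if_pos hz2]
    omega
  · rw [if_neg (by omega)]
    have hbs := bsP_eq hτ hf x h1 h2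
    have hbep := beP_eq hτ hf x h1 h2
    split_ifs <;> omega

include hf in
lemma gN_lt (x : Fin (2*d)) {z : ℕ} (h1 : base τ x ≤ z)
    (h2 : z < base τ x + (U τ x).card) : gN τ z < 2 * d := by
  have h3 := (gN_mem hτ hf x h1 h2).1.2
  have h4 := base_add_le hτ x
  omega

include hf in
lemma gN_inj (x x' : Fin (2*d)) {z z' : ℕ}
    (h1 : base τ x ≤ z) (h2 : z < base τ x + (U τ x).card)
    (h1' : base τ x' ≤ z') (h2' : z' < base τ x' + (U τ x').card)
    (h : gN τ z = gN τ z') : z = z' := by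
  have hm1 := gN_mem hτ hf x h1 h2
  have hm2 := gN_mem hτ hf x' h1' h2'
  -- blocks of gN z and gN z' coincide
  have hmm : m τ x = m τ x' := by
    refine rep_unique hτ (m_rep hτ x) (m_rep hτ x') (z := gN τ z) ?_ ?_ ?_ ?_
    · rw [base_rep_eq hτ hf]; exact hm1.1.1
    · rw [base_rep_eq hτ hf, card_U_rep_eq hτ hf]; exact hm1.1.2
    · rw [base_rep_eq hτ hf, h]; exact hm2.1.1
    · rw [base_rep_eq hτ hf, card_U_rep_eq hτ hf, h]; exact hm2.1.2
  have hbb : base τ x = base τ x' := by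
    rw [← base_rep_eq hτ hf x, ← base_rep_eq hτ hf x', hmm]
  have hcc : (U τ x).card = (U τ x').card := by
    rw [← card_U_rep_eq hτ hf x, ← card_U_rep_eq hτ hf x', hmm]
  have hbe := base_even hτ hf x
  have hbs := bsP_eq hτ hf x h1 h2
  have hbep := beP_eq hτ hf x h1 h2
  have hbs' := bsP_eq hτ hf x' h1' h2'
  have hbep' := beP_eq hτ hf x' h1' h2'
  unfold gN at h
  split_ifs at h <;> omega

variable (τ) in
noncomputable def gF (hτ : τ * τ = 1) (hf : ∀ x, τ x ≠ x) (y : Fin (2*d)) : Fin (2*d) :=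
  ⟨gN τ (y : ℕ) % (2*d), Nat.mod_lt _ y.pos⟩

include hf in
lemma gF_val (y : Fin (2*d)) : ((gF τ hτ hf y : Fin (2*d)) : ℕ) = gN τ (y : ℕ) := by
  obtain ⟨x, hx1, hx2⟩ := cover hτ hf y.isLt
  unfold gF
  simp [Nat.mod_eq_of_lt (gN_lt hτ hf x hx1 hx2)]

noncomputable def pi (hτ : τ * τ = 1) (hf : ∀ x, τ x ≠ x) : Equiv.Perm (Fin (2*d)) :=
  Equiv.ofBijective (gF τ hτ hf)
    (Finite.injective_iff_bijective.mp (fun y y' hyy => by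
      obtain ⟨x, hx1, hx2⟩ := cover hτ hf y.isLt
      obtain ⟨x', hx1', hx2'⟩ := cover hτ hf y'.isLt
      have := congrArg Fin.val hyy
      rw [gF_val hτ hf, gF_val hτ hf] at this
      exact Fin.ext (gN_inj hτ hf x x' hx1 hx2 hx1' hx2' this)))

include hf in
lemma pi_val (y : Fin (2*d)) : ((pi hτ hf y : Fin (2*d)) : ℕ) = gN τ (y : ℕ) := gF_val hτ hf y

include hf in
lemma gN_e_step (x : Fin (2*d)) {z : ℕ} (h1 : base τ x ≤ z)
    (h2 : z < base τ x + (U τ x).card) :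
    gN τ (if z % 2 = 0 then z + 1 else z - 1) = tD τ (gN τ z) := by
  have hbe := base_even hτ hf x
  have hc := card_U hτ hf x
  have hL := lam_pos (τ := τ) x
  have hbs := bsP_eq hτ hf x h1 h2
  have hbep := beP_eq hτ hf x h1 h2
  rcases Nat.mod_two_eq_zero_or_one z with hz2 | hz2
  · -- z even; gN z = z, and z+1 is in the same block
    rw [if_pos hz2]
    have hz1 : base τ x ≤ z + 1 := by omega
    have hz1' : z + 1 < base τ x + (U τ x).card := by omega
    have hbs1 := bsP_eq hτ hf x hz1 hz1'
    have hbep1 := beP_eq hτ hf x hz1 hz1'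
    have hgz : gN τ z = z := by unfold gN; rw [if_pos hz2]
    rw [hgz]
    unfold gN tD
    rw [if_neg (by omega), if_pos hz2, hbs1, hbep1, hbs, hbep]
  · -- z odd
    rw [if_neg (by omega)]
    have hgz1 : gN τ (z - 1) = z - 1 := by unfold gN; rw [if_pos (by omega)]
    rw [hgz1]
    have hgz : gN τ z = if z + 1 = base τ x + (U τ x).card then base τ x + 1 else z + 2 := by
      unfold gN
      rw [if_neg (by omega), hbs, hbep]
    rw [hgz]
    split_ifs with hw
    · -- wrap case : gN z = base + 1
      have hb1 : base τ x ≤ base τ x + 1 := by omega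
      have hb1' : base τ x + 1 < base τ x + (U τ x).card := by omega
      have hbsb := bsP_eq hτ hf x hb1 hb1'
      have hbepb := beP_eq hτ hf x hb1 hb1'
      unfold tD
      rw [if_neg (by omega), if_pos (by rw [hbsb]), hbepb]
      omega
    · -- no wrap : gN z = z + 2
      have hz1 : base τ x ≤ z + 2 := by omega
      have hz1' : z + 2 < base τ x + (U τ x).card := by omega
      have hbs2 := bsP_eq hτ hf x hz1 hz1'
      have hbep2 := beP_eq hτ hf x hz1 hz1'
      unfold tD
      rw [if_neg (by omega), if_neg (by rw [hbs2]; omega)]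
      omega

include hf in
lemma e_val_ite (y : Fin (2*d)) :
    ((pairSwap d y : Fin (2*d)) : ℕ) = if (y:ℕ) % 2 = 0 then (y:ℕ) + 1 else (y:ℕ) - 1 := by
  rw [e_val]
  split_ifs <;> omega

include hf in
lemma conj_eq :
    sig hτ hf * τ * (sig hτ hf)⁻¹ = pi hτ hf * pairSwap d * (pi hτ hf)⁻¹ := by
  ext w
  simp only [Equiv.Perm.mul_apply]
  -- LHS
  have hx : sig hτ hf ((sig hτ hf)⁻¹ w) = w := Equiv.apply_symm_apply _ _
  have hLHS : ((sig hτ hf (τ ((sig hτ hf)⁻¹ w)) : Fin (2*d)) : ℕ) = tD τ (w : ℕ) := by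
    rw [sig_val hτ hf, fN_tau hτ hf]
    congr 1
    rw [← sig_val hτ hf, hx]
  -- RHS
  have hu : pi hτ hf ((pi hτ hf)⁻¹ w) = w := Equiv.apply_symm_apply _ _
  set u := (pi hτ hf)⁻¹ w with hudef
  obtain ⟨x, hx1, hx2⟩ := cover hτ hf u.isLt
  have hRHS : ((pi hτ hf (pairSwap d u) : Fin (2*d)) : ℕ) = tD τ (w : ℕ) := by
    rw [pi_val hτ hf, e_val_ite hτ hf, gN_e_step hτ hf x hx1 hx2]
    congr 1
    rw [← pi_val hτ hf, hu]
  exact hLHS.trans hRHS.symm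
variable (τ) in
open scoped Classical in
noncomputable def Rset : Finset (Fin (2*d)) := univ.filter (fun y => m τ y = y)

variable (τ) in
open scoped Classical in
noncomputable def rnk (p : Fin (2*d)) : ℕ := ((Rset τ).filter (fun y => y < p)).card

variable (τ) in
open scoped Classical in
noncomputable def Dn (j : ℕ) : ℕ := ∑ y ∈ (Rset τ).filter (fun y => rnk τ y < j), lam τ y

omit hτ in
lemma mem_Rset {p : Fin (2*d)} : p ∈ Rset τ ↔ m τ p = p := by
  classical
  simp [Rset]

omit hτ in
lemma rnk_lt {p : Fin (2*d)} (hp : p ∈ Rset τ) : rnk τ p < (Rset τ).card := by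
  classical
  have h1 : (Rset τ).filter (fun y => y < p) ⊆ (Rset τ).erase p := by
    intro y hy
    rw [Finset.mem_filter] at hy
    exact Finset.mem_erase.2 ⟨ne_of_lt hy.2, hy.1⟩
  have h2 := Finset.card_le_card h1
  have h3 := Finset.card_erase_of_mem hp
  have h4 : 1 ≤ (Rset τ).card := Finset.card_pos.2 ⟨p, hp⟩
  unfold rnk
  omega

omit hτ in
lemma rnk_strictMono {p q : Fin (2*d)} (hp : p ∈ Rset τ) (hlt : p < q) :
    rnk τ p < rnk τ q := by
  classical
  have hnot : p ∉ (Rset τ).filter (fun y => y < p) := by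
    rw [Finset.mem_filter]
    rintro ⟨-, h⟩
    exact lt_irrefl _ h
  have h1 : insert p ((Rset τ).filter (fun y => y < p)) ⊆ (Rset τ).filter (fun y => y < q) := by
    intro y hy
    rcases Finset.mem_insert.1 hy with rfl | hy
    · exact Finset.mem_filter.2 ⟨hp, hlt⟩
    · rw [Finset.mem_filter] at hy ⊢
      exact ⟨hy.1, lt_trans hy.2 hlt⟩
  have h2 := Finset.card_le_card h1
  rw [Finset.card_insert_of_notMem hnot] at h2
  unfold rnk
  omega

omit hτ in
lemma rnk_inj {p q : Fin (2*d)} (hp : p ∈ Rset τ) (hq : q ∈ Rset τ)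
    (h : rnk τ p = rnk τ q) : p = q := by
  rcases lt_trichotomy p q with hlt | hlt | hlt
  · exact absurd h (ne_of_lt (rnk_strictMono hp hlt))
  · exact hlt
  · exact absurd h.symm (ne_of_lt (rnk_strictMono hq hlt))

omit hτ in
lemma rnk_surj {j : ℕ} (hj : j < (Rset τ).card) : ∃ p ∈ Rset τ, rnk τ p = j := by
  classical
  have := Finset.surj_on_of_inj_on_of_card_le (s := Rset τ) (t := Finset.range ((Rset τ).card))
    (fun p _ => rnk τ p) (fun p hp => Finset.mem_range.2 (rnk_lt hp))
    (fun p q hp hq h => rnk_inj hp hq h) (by rw [Finset.card_range])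
  obtain ⟨p, hp, hp2⟩ := this j (Finset.mem_range.2 hj)
  exact ⟨p, hp, hp2.symm⟩

omit hτ in
lemma rnk_lt_iff {p q : Fin (2*d)} (hp : p ∈ Rset τ) (hq : q ∈ Rset τ) :
    rnk τ p < rnk τ q ↔ p < q := by
  constructor
  · intro h
    rcases lt_trichotomy p q with hlt | rfl | hlt
    · exact hlt
    · omega
    · exact absurd (rnk_strictMono hq hlt) (by omega)
  · exact rnk_strictMono hp

omit hτ in
lemma Dn_zero : Dn τ 0 = 0 := by
  classical
  unfold Dn
  rw [Finset.sum_eq_zero_iff]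
  intro y hy
  rw [Finset.mem_filter] at hy
  omega

include hf in
lemma Dn_top : Dn τ ((Rset τ).card) = d := by
  classical
  have hfe : (Rset τ).filter (fun y => rnk τ y < (Rset τ).card) = Rset τ := by
    ext y
    rw [Finset.mem_filter]
    exact ⟨fun h => h.1, fun h => ⟨h, rnk_lt h⟩⟩
  unfold Dn
  rw [hfe]
  have h1 : ∑ y ∈ Rset τ, (U τ y).card = 2 * d := sum_reps hτ
  have h2 : ∑ y ∈ Rset τ, (U τ y).card = ∑ y ∈ Rset τ, 2 * lam τ y :=
    Finset.sum_congr rfl (fun y _ => card_U hτ hf y)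
  rw [h2, ← Finset.mul_sum] at h1
  omega

include hf in
lemma Dn_succ {p : Fin (2*d)} (hp : p ∈ Rset τ) :
    Dn τ (rnk τ p + 1) = Dn τ (rnk τ p) + lam τ p := by
  classical
  have hnot : p ∉ (Rset τ).filter (fun y => rnk τ y < rnk τ p) := by
    rw [Finset.mem_filter]
    rintro ⟨-, h⟩
    omega
  have hfe : (Rset τ).filter (fun y => rnk τ y < rnk τ p + 1)
      = insert p ((Rset τ).filter (fun y => rnk τ y < rnk τ p)) := by
    ext y
    rw [Finset.mem_insert, Finset.mem_filter, Finset.mem_filter]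
    constructor
    · rintro ⟨hy, h⟩
      rcases Nat.lt_succ_iff_lt_or_eq.1 h with h | h
      · exact Or.inr ⟨hy, h⟩
      · exact Or.inl (rnk_inj hy hp h)
    · rintro (rfl | ⟨hy, h⟩)
      · exact ⟨hp, by omega⟩
      · exact ⟨hy, by omega⟩
  unfold Dn
  rw [hfe, Finset.sum_insert hnot]
  omega

include hf in
lemma base_rnk {p : Fin (2*d)} (hp : p ∈ Rset τ) : base τ p = 2 * Dn τ (rnk τ p) := by
  classical
  rw [mem_Rset] at hp
  have hfe : univ.filter (fun y => m τ y = y ∧ y < m τ p)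
      = (Rset τ).filter (fun y => rnk τ y < rnk τ p) := by
    ext y
    simp only [Finset.mem_filter, Finset.mem_univ, true_and, mem_Rset]
    rw [hp]
    constructor
    · rintro ⟨hy, h⟩
      exact ⟨hy, (rnk_lt_iff (mem_Rset.2 hy) (mem_Rset.2 hp)).2 h⟩
    · rintro ⟨hy, h⟩
      exact ⟨hy, (rnk_lt_iff (mem_Rset.2 hy) (mem_Rset.2 hp)).1 h⟩
  unfold base
  rw [hfe]
  unfold Dn
  rw [Finset.mul_sum]
  refine Finset.sum_congr rfl (fun y hy => ?_)
  rw [Finset.mem_filter] at hy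
  exact card_U hτ hf y

include hf in
lemma sig_e_comm : sig hτ hf * pairSwap d = pairSwap d * sig hτ hf := by
  ext z
  simp only [Equiv.Perm.mul_apply]
  exact congrArg Fin.val (fF_e hτ hf z)

end S7

theorem statement7 (d : ℕ) (hd : 1 ≤ d) (σ : Equiv.Perm (Fin (2 * d))) :
    ∃ σ' σ'' : Equiv.Perm (Fin (2 * d)),
      σ' * pairSwap d = pairSwap d * σ' ∧
      σ'' * pairSwap d = pairSwap d * σ'' ∧
      ∃ (r : ℕ) (_ : 1 ≤ r) (D : Fin (r + 1) → ℕ),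
        D 0 = 0 ∧ D (Fin.last r) = d ∧ StrictMono D ∧
        (∀ (s : ℕ) (hs : s < d),
          (σ' * σ * σ'') ⟨2 * s, by omega⟩ = ⟨2 * s, by omega⟩) ∧
        (∀ (j : Fin r) (s : ℕ) (hs : s < d), D j.castSucc ≤ s → s < D j.succ →
          (((σ' * σ * σ'') ⟨2 * s + 1, by omega⟩ : Fin (2 * d)) : ℕ) =
            if s + 1 = D j.succ then 2 * D j.castSucc + 1 else 2 * s + 3) := by
  classical
  set τ : Equiv.Perm (Fin (2*d)) := σ * pairSwap d * σ⁻¹ with hτdef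
  have hτ : τ * τ = 1 := by
    rw [hτdef]
    calc (σ * pairSwap d * σ⁻¹) * (σ * pairSwap d * σ⁻¹)
        = σ * (pairSwap d * pairSwap d) * σ⁻¹ := by group
      _ = 1 := by rw [S7.e_mul_self]; group
  have hf : ∀ x, τ x ≠ x := by
    intro x h
    apply S7.e_fpf (σ⁻¹ x)
    apply σ.injective
    rw [show σ (σ⁻¹ x) = x from Equiv.apply_symm_apply _ _]
    rw [hτdef] at h
    simpa [Equiv.Perm.mul_apply] using h
  refine ⟨S7.sig hτ hf, σ⁻¹ * (S7.sig hτ hf)⁻¹ * S7.pi hτ hf, S7.sig_e_comm hτ hf, ?_, ?_⟩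
  · -- σ'' commutes with pairSwap
    have h1 := S7.conj_eq hτ hf
    have h3 : (σ⁻¹ * (S7.sig hτ hf)⁻¹ * S7.pi hτ hf) * pairSwap d
          * (σ⁻¹ * (S7.sig hτ hf)⁻¹ * S7.pi hτ hf)⁻¹
        = σ⁻¹ * (S7.sig hτ hf)⁻¹
          * (S7.pi hτ hf * pairSwap d * (S7.pi hτ hf)⁻¹) * (S7.sig hτ hf) * σ := by
      group
    rw [← h1] at h3
    have h5 : σ⁻¹ * τ * σ = pairSwap d := by
      rw [hτdef]
      group
    have h6 : σ⁻¹ * (S7.sig hτ hf)⁻¹ * (S7.sig hτ hf * τ * (S7.sig hτ hf)⁻¹)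
        * (S7.sig hτ hf) * σ = σ⁻¹ * τ * σ := by group
    have h4 : (σ⁻¹ * (S7.sig hτ hf)⁻¹ * S7.pi hτ hf) * pairSwap d
          * (σ⁻¹ * (S7.sig hτ hf)⁻¹ * S7.pi hτ hf)⁻¹ = pairSwap d := by
      rw [h3, h6, h5]
    calc (σ⁻¹ * (S7.sig hτ hf)⁻¹ * S7.pi hτ hf) * pairSwap d
        = ((σ⁻¹ * (S7.sig hτ hf)⁻¹ * S7.pi hτ hf) * pairSwap d
            * (σ⁻¹ * (S7.sig hτ hf)⁻¹ * S7.pi hτ hf)⁻¹)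
          * (σ⁻¹ * (S7.sig hτ hf)⁻¹ * S7.pi hτ hf) := by group
      _ = pairSwap d * (σ⁻¹ * (S7.sig hτ hf)⁻¹ * S7.pi hτ hf) := by rw [h4]
  · have hperm : S7.sig hτ hf * σ * (σ⁻¹ * (S7.sig hτ hf)⁻¹ * S7.pi hτ hf)
        = S7.pi hτ hf := by group
    have hrpos : 1 ≤ (S7.Rset τ).card := by
      refine Finset.card_pos.2 ⟨S7.m τ ⟨0, by omega⟩, S7.mem_Rset.2 (S7.m_rep hτ _)⟩
    refine ⟨(S7.Rset τ).card, hrpos, fun j => S7.Dn τ (j : ℕ), ?_, ?_, ?_, ?_, ?_⟩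
    · simp only [Fin.val_zero]
      exact S7.Dn_zero
    · simp only [Fin.val_last]
      exact S7.Dn_top hτ hf
    · rw [Fin.strictMono_iff_lt_succ]
      intro j
      obtain ⟨p, hp, hpr⟩ := S7.rnk_surj (τ := τ) (j := (j : ℕ)) j.isLt
      have hsucc := S7.Dn_succ hτ hf hp
      have hl := S7.lam_pos (τ := τ) p
      rw [hpr] at hsucc
      simp only [Fin.coe_castSucc, Fin.val_succ]
      omega
    · intro s hs
      rw [hperm]
      apply Fin.ext
      rw [S7.pi_val hτ hf]
      show S7.gN τ (2*s) = 2*s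
      unfold S7.gN
      rw [if_pos (by omega)]
    · intro j s hs hj1 hj2
      rw [hperm]
      simp only [Fin.coe_castSucc, Fin.val_succ] at hj1 hj2 ⊢
      obtain ⟨p, hp, hpr⟩ := S7.rnk_surj (τ := τ) (j := (j : ℕ)) j.isLt
      have hbase : S7.base τ p = 2 * S7.Dn τ (j:ℕ) := by
        rw [S7.base_rnk hτ hf hp, hpr]
      have hsucc : S7.Dn τ ((j:ℕ)+1) = S7.Dn τ (j:ℕ) + S7.lam τ p := by
        rw [← hpr]
        exact S7.Dn_succ hτ hf hp
      have hcard : (S7.U τ p).card = 2 * S7.lam τ p := S7.card_U hτ hf p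
      have hz1 : S7.base τ p ≤ 2*s+1 := by omega
      have hz2 : 2*s+1 < S7.base τ p + (S7.U τ p).card := by omega
      rw [S7.pi_val hτ hf]
      show S7.gN τ (2*s+1) = _
      have hbs := S7.bsP_eq hτ hf p hz1 hz2
      have hbep := S7.beP_eq hτ hf p hz1 hz2
      unfold S7.gN
      rw [if_neg (by omega), hbs, hbep]
      split_ifs <;> omega
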